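/- Let p be a prime and A a finite symmetric generating set of SL₂(F_p) with |A³| = K·|A|. Then for every h ∈ SL₂(F_p), every γ ∈ F_p*, and every integer k ≥ 1: |(h·l_γ·h⁻¹) ∩ A^k| ≤ 2·|A^(3k+2)|^(1/3) ≤ 2·K^k·|A|^(1/3). -/

import Mathlib

open Pointwise

set_option maxRecDepth 8000

instance (p : ℕ) : DecidableEq (Matrix.SpecialLinearGroup (Fin 2) (ZMod p)) := by
  unfold Matrix.SpecialLinearGroup
  infer_instance

namespace SL2LineAux

open Matrix

lemma entry10 {R : Type*} [CommRing R] (α β ζ δ γ γ' t₁ t₂ t₃ : R) :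
    (!![γ,t₁;0,γ'] * !![α,β;ζ,δ] * !![γ,t₂;0,γ'] * !![α,β;ζ,δ] * !![γ,t₃;0,γ']) 1 0
      = γ * γ' * (ζ^2*t₂ + γ*α*ζ + γ'*ζ*δ) := by
  simp [Matrix.mul_fin_two]
  ring

lemma entry00 {R : Type*} [CommRing R] (α β ζ δ γ γ' t₁ t₂ t₃ : R) :
    (!![γ,t₁;0,γ'] * !![α,β;ζ,δ] * !![γ,t₂;0,γ'] * !![α,β;ζ,δ] * !![γ,t₃;0,γ']) 0 0
      = γ^2 * (α^2*γ + α*ζ*t₂ + β*ζ*γ') + γ * t₁ * (ζ^2*t₂ + γ*α*ζ + γ'*ζ*δ) := by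
  simp [Matrix.mul_fin_two]
  ring

lemma entry11 {R : Type*} [CommRing R] (α β ζ δ γ γ' t₁ t₂ t₃ : R) :
    (!![γ,t₁;0,γ'] * !![α,β;ζ,δ] * !![γ,t₂;0,γ'] * !![α,β;ζ,δ] * !![γ,t₃;0,γ']) 1 1
      = γ' * t₃ * (ζ^2*t₂ + γ*α*ζ + γ'*ζ*δ) + γ'^2 * (β*γ*ζ + δ*ζ*t₂ + δ^2*γ') := by
  simp [Matrix.mul_fin_two]
  ring

variable {p : ℕ} [Fact p.Prime]

abbrev SL (p : ℕ) := Matrix.SpecialLinearGroup (Fin 2) (ZMod p)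

/-- The conjugate of the Borel subgroup (upper triangular matrices). -/
def conjBorel (h : SL p) : Subgroup (SL p) where
  carrier := {g | ((h⁻¹ * g * h : SL p) : Matrix (Fin 2) (Fin 2) (ZMod p)) 1 0 = 0}
  one_mem' := by
    have e : (h⁻¹ * 1 * h : SL p) = 1 := by group
    simp only [Set.mem_setOf_eq, e, Matrix.SpecialLinearGroup.coe_one]
    simp [Matrix.one_apply]
  mul_mem' := by
    intro g g' hg hg'
    have e : h⁻¹ * (g * g') * h = (h⁻¹ * g * h) * (h⁻¹ * g' * h) := by group
    simp only [Set.mem_setOf_eq] at hg hg' ⊢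
    rw [e]
    rw [Matrix.SpecialLinearGroup.coe_mul, Matrix.mul_apply, Fin.sum_univ_two, hg, hg']
    ring
  inv_mem' := by
    intro g hg
    have e : h⁻¹ * g⁻¹ * h = (h⁻¹ * g * h)⁻¹ := by group
    simp only [Set.mem_setOf_eq] at hg ⊢
    rw [e, Matrix.SpecialLinearGroup.coe_inv, Matrix.adjugate_fin_two]
    simp [hg]

/-- The lower unipotent element. -/
def lowerUnip : SL p := ⟨!![1,0;1,1], by simp [Matrix.det_fin_two_of]⟩

lemma exists_good (h : SL p) (A : Finset (SL p))
    (hgen : Subgroup.closure (A : Set (SL p)) = ⊤) :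
    ∃ a ∈ A, ((h⁻¹ * a * h : SL p) : Matrix (Fin 2) (Fin 2) (ZMod p)) 1 0 ≠ 0 := by
  by_contra hc
  push_neg at hc
  have hsub : (A : Set (SL p)) ⊆ (conjBorel h : Set (SL p)) := fun a ha => hc a ha
  have htop : (⊤ : Subgroup (SL p)) ≤ conjBorel h := by
    rw [← hgen]; exact (Subgroup.closure_le _).2 hsub
  have hmem : (h * lowerUnip * h⁻¹ : SL p) ∈ conjBorel h := htop (Subgroup.mem_top _)
  have h0 : ((h⁻¹ * (h * lowerUnip * h⁻¹) * h : SL p) :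
      Matrix (Fin 2) (Fin 2) (ZMod p)) 1 0 = 0 := hmem
  have e : h⁻¹ * (h * lowerUnip * h⁻¹) * h = (lowerUnip : SL p) := by group
  rw [e] at h0
  have h1 : (1 : ZMod p) = 0 := by
    rw [show ((lowerUnip : SL p) : Matrix (Fin 2) (Fin 2) (ZMod p)) 1 0 = 1 from rfl] at h0
    exact h0
  exact one_ne_zero h1

/-- Element of the line `l_γ`. -/
def gelem (γ : (ZMod p)ˣ) (t : ZMod p) : SL p :=
  ⟨!![(γ : ZMod p), t; 0, ((γ⁻¹ : (ZMod p)ˣ) : ZMod p)], by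
    rw [Matrix.det_fin_two_of, mul_zero, sub_zero, ← Units.val_mul, mul_inv_cancel,
      Units.val_one]⟩

lemma gelem_coe (γ : (ZMod p)ˣ) (t : ZMod p) :
    (gelem γ t : Matrix (Fin 2) (Fin 2) (ZMod p)) =
      !![(γ : ZMod p), t; 0, ((γ⁻¹ : (ZMod p)ˣ) : ZMod p)] := rfl

lemma gelem_inj (γ : (ZMod p)ˣ) : Function.Injective (gelem (p := p) γ) := by
  intro t s hts
  have h1 : (gelem γ t : Matrix (Fin 2) (Fin 2) (ZMod p)) 0 1 =
      (gelem γ s : Matrix (Fin 2) (Fin 2) (ZMod p)) 0 1 := by rw [hts]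
  rw [gelem_coe, gelem_coe] at h1
  simpa only [Matrix.of_apply, Matrix.cons_val_zero, Matrix.cons_val_one, Matrix.head_cons]
    using h1

/-- The numeric cube-root bound. -/
lemma cube_bound (n n' N : ℕ) (h1 : n * (n' * n) ≤ N) (h2 : n ≤ n' + 1) (hN : 1 ≤ N) :
    (n : ℝ) ≤ 2 * (N : ℝ) ^ ((1:ℝ)/3) := by
  have hN0 : (0:ℝ) ≤ (N:ℝ) := Nat.cast_nonneg N
  have hN1 : (1:ℝ) ≤ (N:ℝ) ^ ((1:ℝ)/3) := by
    calc (1:ℝ) = (1:ℝ) ^ ((1:ℝ)/3) := (Real.one_rpow _).symm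
    _ ≤ (N:ℝ) ^ ((1:ℝ)/3) :=
      Real.rpow_le_rpow zero_le_one (by exact_mod_cast hN) (by norm_num)
  rcases le_or_gt n 1 with hn | hn
  · have : (n:ℝ) ≤ 1 := by exact_mod_cast hn
    linarith
  · have h2' : n ≤ 2 * n' := by omega
    have hn3 : n ^ 3 ≤ 2 * N := by
      calc n ^ 3 = n * (n * n) := by ring
      _ ≤ n * ((2 * n') * n) := by
          apply Nat.mul_le_mul_left
          exact Nat.mul_le_mul_right _ h2'
      _ = 2 * (n * (n' * n)) := by ring
      _ ≤ 2 * N := by omega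
    have hr : ((n:ℝ)) ^ 3 ≤ (2 * (N:ℝ) ^ ((1:ℝ)/3)) ^ 3 := by
      have hcube : (2 * (N:ℝ) ^ ((1:ℝ)/3)) ^ 3 = 8 * (N:ℝ) := by
        rw [mul_pow, ← Real.rpow_natCast ((N:ℝ) ^ ((1:ℝ)/3)) 3, ← Real.rpow_mul hN0]
        norm_num
      rw [hcube]
      have hcast : ((n:ℝ)) ^ 3 ≤ 2 * (N:ℝ) := by exact_mod_cast hn3
      linarith
    exact le_of_pow_le_pow_left₀ (by norm_num) (by positivity) hr

end SL2LineAux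

open SL2LineAux in
/-- **Lemma 2.4** (Larsen–Pink type bound for lines): let `p` be prime, `A` a finite
symmetric generating set of `SL₂(F_p)` with `|A³| = K·|A|`. Then for every `h ∈ SL₂(F_p)`,
every `γ ∈ F_p*`, and every `k ≥ 1`:
`|(h·l_γ·h⁻¹) ∩ A^k| ≤ 2·|A^{3k+2}|^{1/3} ≤ 2·K^k·|A|^{1/3}`,
where `l_γ = {[[γ, t], [0, γ⁻¹]] : t ∈ F_p}`. -/
theorem SL2_line_intersection
    (p : ℕ) (hp : p.Prime)
    (A : Finset (Matrix.SpecialLinearGroup (Fin 2) (ZMod p)))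
    (hsym : A⁻¹ = A)
    (hgen : Subgroup.closure (A : Set (Matrix.SpecialLinearGroup (Fin 2) (ZMod p))) = ⊤)
    (K : ℝ) (hK : ((A ^ 3).card : ℝ) = K * (A.card : ℝ))
    (h : Matrix.SpecialLinearGroup (Fin 2) (ZMod p))
    (γ : (ZMod p)ˣ) (k : ℕ) (hk : 1 ≤ k) :
    (Set.ncard {x : Matrix.SpecialLinearGroup (Fin 2) (ZMod p) |
        (∃ g : Matrix.SpecialLinearGroup (Fin 2) (ZMod p),
          (∃ t : ZMod p, (g : Matrix (Fin 2) (Fin 2) (ZMod p)) =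
            !![(γ : ZMod p), t; 0, ((γ⁻¹ : (ZMod p)ˣ) : ZMod p)]) ∧
          x = h * g * h⁻¹) ∧ x ∈ A ^ k} : ℝ)
      ≤ 2 * ((A ^ (3 * k + 2)).card : ℝ) ^ ((1 : ℝ) / 3) ∧
    2 * ((A ^ (3 * k + 2)).card : ℝ) ^ ((1 : ℝ) / 3)
      ≤ 2 * K ^ k * (A.card : ℝ) ^ ((1 : ℝ) / 3) := by
  haveI : Fact p.Prime := ⟨hp⟩
  classical
  -- A is nonempty
  have hAne : A.Nonempty := by
    by_contra hA0
    rw [Finset.not_nonempty_iff_eq_empty] at hA0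
    subst hA0
    simp only [Finset.coe_empty, Subgroup.closure_empty] at hgen
    have hb : (gelem γ 1 : SL p) ∈ (⊥ : Subgroup (SL p)) := by
      rw [hgen]; exact Subgroup.mem_top _
    rw [Subgroup.mem_bot] at hb
    have h1 : (gelem γ 1 : Matrix (Fin 2) (Fin 2) (ZMod p)) 0 1 =
        ((1 : SL p) : Matrix (Fin 2) (Fin 2) (ZMod p)) 0 1 := by rw [hb]
    rw [gelem_coe, Matrix.SpecialLinearGroup.coe_one] at h1
    simp only [Matrix.of_apply, Matrix.cons_val_zero, Matrix.cons_val_one, Matrix.head_cons,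
      Matrix.one_apply_ne (by decide : (0 : Fin 2) ≠ 1)] at h1
    exact one_ne_zero h1
  have hApos : 0 < A.card := Finset.card_pos.2 hAne
  have hN1 : 1 ≤ (A ^ (3 * k + 2)).card := by
    apply Finset.card_pos.2
    exact hAne.pow
  -- the good conjugating element
  obtain ⟨a, haA, hζ⟩ := exists_good h A hgen
  set a' : SL p := h⁻¹ * a * h with ha'def
  set α := (a' : Matrix (Fin 2) (Fin 2) (ZMod p)) 0 0 with hα
  set β := (a' : Matrix (Fin 2) (Fin 2) (ZMod p)) 0 1 with hβ
  set ζ := (a' : Matrix (Fin 2) (Fin 2) (ZMod p)) 1 0 with hζdef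
  set δ := (a' : Matrix (Fin 2) (Fin 2) (ZMod p)) 1 1 with hδ
  have ha'm : (a' : Matrix (Fin 2) (Fin 2) (ZMod p)) = !![α,β;ζ,δ] :=
    Matrix.eta_fin_two _
  have hζ0 : ζ ≠ 0 := hζ
  have hγ0 : (γ : ZMod p) ≠ 0 := γ.ne_zero
  have hγ'0 : ((γ⁻¹ : (ZMod p)ˣ) : ZMod p) ≠ 0 := (γ⁻¹).ne_zero
  have hγγ' : (γ : ZMod p) * ((γ⁻¹ : (ZMod p)ˣ) : ZMod p) = 1 := by
    rw [← Units.val_mul, mul_inv_cancel, Units.val_one]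
  -- parametrization of the line
  set f : ZMod p → SL p := fun t => h * gelem γ t * h⁻¹ with hfdef
  have hfinj : Function.Injective f := by
    intro t s hts
    apply gelem_inj γ
    have := mul_left_cancel (mul_right_cancel hts)
    exact this
  set T : Finset (ZMod p) := Finset.univ.filter (fun t => f t ∈ A ^ k) with hTdef
  -- the set in question equals f '' T
  have hSeq : {x : SL p |
        (∃ g : SL p,
          (∃ t : ZMod p, (g : Matrix (Fin 2) (Fin 2) (ZMod p)) =
            !![(γ : ZMod p), t; 0, ((γ⁻¹ : (ZMod p)ˣ) : ZMod p)]) ∧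
          x = h * g * h⁻¹) ∧ x ∈ A ^ k} = f '' ↑T := by
    ext x
    simp only [Set.mem_setOf_eq, Set.mem_image, Finset.mem_coe, hTdef, Finset.mem_filter,
      Finset.mem_univ, true_and]
    constructor
    · rintro ⟨⟨g, ⟨t, hgt⟩, rfl⟩, hxk⟩
      have hg : g = gelem γ t := Subtype.ext (by rw [hgt, gelem_coe])
      subst hg
      exact ⟨t, hxk, rfl⟩
    · rintro ⟨t, ht, rfl⟩
      exact ⟨⟨gelem γ t, ⟨t, gelem_coe γ t⟩, rfl⟩, ht⟩
  have hncard : (Set.ncard {x : SL p |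
        (∃ g : SL p,
          (∃ t : ZMod p, (g : Matrix (Fin 2) (Fin 2) (ZMod p)) =
            !![(γ : ZMod p), t; 0, ((γ⁻¹ : (ZMod p)ˣ) : ZMod p)]) ∧
          x = h * g * h⁻¹) ∧ x ∈ A ^ k}) = T.card := by
    rw [hSeq, Set.ncard_image_of_injective _ hfinj, Set.ncard_coe_finset]
  -- the subset avoiding the bad value
  set T' : Finset (ZMod p) :=
    T.filter (fun t => ζ^2*t + (γ : ZMod p)*α*ζ + ((γ⁻¹ : (ZMod p)ˣ) : ZMod p)*ζ*δ ≠ 0)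
    with hT'def
  have hTT' : T.card ≤ T'.card + 1 := by
    have hsplit := Finset.card_filter_add_card_filter_not
      (s := T) (p := fun t => ζ^2*t + (γ : ZMod p)*α*ζ + ((γ⁻¹ : (ZMod p)ˣ) : ZMod p)*ζ*δ ≠ 0)
    have hone : (T.filter (fun t =>
        ¬ (ζ^2*t + (γ : ZMod p)*α*ζ + ((γ⁻¹ : (ZMod p)ˣ) : ZMod p)*ζ*δ ≠ 0))).card ≤ 1 := by
      apply Finset.card_le_one.2
      intro x hx y hy
      rw [Finset.mem_filter, not_not] at hx hy
      have hxy : ζ^2*x = ζ^2*y := by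
        have := hx.2.trans hy.2.symm
        linear_combination this
      exact mul_left_cancel₀ (pow_ne_zero 2 hζ0) hxy
    rw [hT'def]
    omega
  -- the tripling map
  set Φ : ZMod p × ZMod p × ZMod p → SL p :=
    fun x => f x.1 * a * f x.2.1 * a * f x.2.2 with hΦdef
  have hkey : ∀ u₁ u₂ u₃ : ZMod p, Φ (u₁, u₂, u₃) =
      h * (gelem γ u₁ * a' * gelem γ u₂ * a' * gelem γ u₃) * h⁻¹ := by
    intro u₁ u₂ u₃
    simp only [hΦdef, hfdef, ha'def]
    group
  have hmaps : ∀ x ∈ T ×ˢ T' ×ˢ T, Φ x ∈ A ^ (3*k+2) := by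
    rintro ⟨t₁, t₂, t₃⟩ hx
    rw [Finset.mem_product] at hx
    obtain ⟨h1, hx2⟩ := hx
    rw [Finset.mem_product] at hx2
    obtain ⟨h2, h3⟩ := hx2
    have h1' : f t₁ ∈ A ^ k := (Finset.mem_filter.1 h1).2
    have h3' : f t₃ ∈ A ^ k := (Finset.mem_filter.1 h3).2
    have h2' : f t₂ ∈ A ^ k := (Finset.mem_filter.1 (Finset.mem_filter.1 h2).1).2
    have e : A ^ (3*k+2) = A^k * A * A^k * A * A^k := by
      rw [show 3*k+2 = (((k+1)+k)+1)+k from by ring, pow_add, pow_add, pow_add, pow_add,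
        pow_one]
    rw [e]
    exact Finset.mul_mem_mul (Finset.mul_mem_mul (Finset.mul_mem_mul
      (Finset.mul_mem_mul h1' haA) h2') haA) h3'
  have hinjon : Set.InjOn Φ ↑(T ×ˢ T' ×ˢ T) := by
    rintro ⟨t₁, t₂, t₃⟩ hx ⟨s₁, s₂, s₃⟩ hy hΦeq
    rw [Finset.mem_coe, Finset.mem_product] at hx hy
    have ht2w : ζ^2*t₂ + (γ : ZMod p)*α*ζ + ((γ⁻¹ : (ZMod p)ˣ) : ZMod p)*ζ*δ ≠ 0 :=
      (Finset.mem_filter.1 ((Finset.mem_product.1 hx.2).1)).2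
    have hs2w : ζ^2*s₂ + (γ : ZMod p)*α*ζ + ((γ⁻¹ : (ZMod p)ˣ) : ZMod p)*ζ*δ ≠ 0 :=
      (Finset.mem_filter.1 ((Finset.mem_product.1 hy.2).1)).2
    rw [hkey, hkey] at hΦeq
    have hmid : gelem γ t₁ * a' * gelem γ t₂ * a' * gelem γ t₃ =
        gelem γ s₁ * a' * gelem γ s₂ * a' * gelem γ s₃ :=
      mul_left_cancel (mul_right_cancel hΦeq)
    have hmat : ((gelem γ t₁ * a' * gelem γ t₂ * a' * gelem γ t₃ : SL p) :
        Matrix (Fin 2) (Fin 2) (ZMod p)) =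
        ((gelem γ s₁ * a' * gelem γ s₂ * a' * gelem γ s₃ : SL p) :
        Matrix (Fin 2) (Fin 2) (ZMod p)) := by rw [hmid]
    simp only [Matrix.SpecialLinearGroup.coe_mul, gelem_coe, ha'm] at hmat
    -- entry (1,0): recover t₂
    have e10t := entry10 α β ζ δ (γ : ZMod p) ((γ⁻¹ : (ZMod p)ˣ) : ZMod p) t₁ t₂ t₃
    have e10s := entry10 α β ζ δ (γ : ZMod p) ((γ⁻¹ : (ZMod p)ˣ) : ZMod p) s₁ s₂ s₃
    have h10 : (!![(γ : ZMod p),t₁;0,((γ⁻¹ : (ZMod p)ˣ) : ZMod p)] * !![α,β;ζ,δ] *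
        !![(γ : ZMod p),t₂;0,((γ⁻¹ : (ZMod p)ˣ) : ZMod p)] * !![α,β;ζ,δ] *
        !![(γ : ZMod p),t₃;0,((γ⁻¹ : (ZMod p)ˣ) : ZMod p)]) 1 0 =
        (!![(γ : ZMod p),s₁;0,((γ⁻¹ : (ZMod p)ˣ) : ZMod p)] * !![α,β;ζ,δ] *
        !![(γ : ZMod p),s₂;0,((γ⁻¹ : (ZMod p)ˣ) : ZMod p)] * !![α,β;ζ,δ] *
        !![(γ : ZMod p),s₃;0,((γ⁻¹ : (ZMod p)ˣ) : ZMod p)]) 1 0 := by rw [hmat]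
    rw [e10t, e10s, hγγ', one_mul, one_mul] at h10
    have ht2 : t₂ = s₂ := by
      have hc : ζ^2*t₂ = ζ^2*s₂ := by linear_combination h10
      exact mul_left_cancel₀ (pow_ne_zero 2 hζ0) hc
    subst ht2
    -- entry (0,0): recover t₁
    have e00t := entry00 α β ζ δ (γ : ZMod p) ((γ⁻¹ : (ZMod p)ˣ) : ZMod p) t₁ t₂ t₃
    have e00s := entry00 α β ζ δ (γ : ZMod p) ((γ⁻¹ : (ZMod p)ˣ) : ZMod p) s₁ t₂ s₃
    have h00 : (!![(γ : ZMod p),t₁;0,((γ⁻¹ : (ZMod p)ˣ) : ZMod p)] * !![α,β;ζ,δ] *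
        !![(γ : ZMod p),t₂;0,((γ⁻¹ : (ZMod p)ˣ) : ZMod p)] * !![α,β;ζ,δ] *
        !![(γ : ZMod p),t₃;0,((γ⁻¹ : (ZMod p)ˣ) : ZMod p)]) 0 0 =
        (!![(γ : ZMod p),s₁;0,((γ⁻¹ : (ZMod p)ˣ) : ZMod p)] * !![α,β;ζ,δ] *
        !![(γ : ZMod p),t₂;0,((γ⁻¹ : (ZMod p)ˣ) : ZMod p)] * !![α,β;ζ,δ] *
        !![(γ : ZMod p),s₃;0,((γ⁻¹ : (ZMod p)ˣ) : ZMod p)]) 0 0 := by rw [hmat]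
    rw [e00t, e00s] at h00
    have ht1 : t₁ = s₁ := by
      have hc : t₁ * ((γ : ZMod p) * (ζ^2*t₂ + (γ : ZMod p)*α*ζ +
          ((γ⁻¹ : (ZMod p)ˣ) : ZMod p)*ζ*δ)) = s₁ * ((γ : ZMod p) * (ζ^2*t₂ +
          (γ : ZMod p)*α*ζ + ((γ⁻¹ : (ZMod p)ˣ) : ZMod p)*ζ*δ)) := by
        linear_combination h00
      exact mul_right_cancel₀ (mul_ne_zero hγ0 ht2w) hc
    -- entry (1,1): recover t₃
    have e11t := entry11 α β ζ δ (γ : ZMod p) ((γ⁻¹ : (ZMod p)ˣ) : ZMod p) t₁ t₂ t₃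
    have e11s := entry11 α β ζ δ (γ : ZMod p) ((γ⁻¹ : (ZMod p)ˣ) : ZMod p) s₁ t₂ s₃
    have h11 : (!![(γ : ZMod p),t₁;0,((γ⁻¹ : (ZMod p)ˣ) : ZMod p)] * !![α,β;ζ,δ] *
        !![(γ : ZMod p),t₂;0,((γ⁻¹ : (ZMod p)ˣ) : ZMod p)] * !![α,β;ζ,δ] *
        !![(γ : ZMod p),t₃;0,((γ⁻¹ : (ZMod p)ˣ) : ZMod p)]) 1 1 =
        (!![(γ : ZMod p),s₁;0,((γ⁻¹ : (ZMod p)ˣ) : ZMod p)] * !![α,β;ζ,δ] *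
        !![(γ : ZMod p),t₂;0,((γ⁻¹ : (ZMod p)ˣ) : ZMod p)] * !![α,β;ζ,δ] *
        !![(γ : ZMod p),s₃;0,((γ⁻¹ : (ZMod p)ˣ) : ZMod p)]) 1 1 := by rw [hmat]
    rw [e11t, e11s] at h11
    have ht3 : t₃ = s₃ := by
      have hc : t₃ * (((γ⁻¹ : (ZMod p)ˣ) : ZMod p) * (ζ^2*t₂ + (γ : ZMod p)*α*ζ +
          ((γ⁻¹ : (ZMod p)ˣ) : ZMod p)*ζ*δ)) = s₃ * (((γ⁻¹ : (ZMod p)ˣ) : ZMod p) *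
          (ζ^2*t₂ + (γ : ZMod p)*α*ζ + ((γ⁻¹ : (ZMod p)ˣ) : ZMod p)*ζ*δ)) := by
        linear_combination h11
      exact mul_right_cancel₀ (mul_ne_zero hγ'0 ht2w) hc
    rw [ht1, ht3]
  have hcard : T.card * (T'.card * T.card) ≤ (A ^ (3*k+2)).card := by
    have hle := Finset.card_le_card_of_injOn Φ hmaps hinjon
    rwa [Finset.card_product, Finset.card_product] at hle
  constructor
  · rw [hncard]
    exact cube_bound T.card T'.card _ hcard hTT' hN1
  · -- second inequality, via small tripling
    have hK0 : 0 ≤ K := by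
      by_contra hneg
      push_neg at hneg
      have hA3 : (0:ℝ) ≤ ((A ^ 3).card : ℝ) := Nat.cast_nonneg _
      have hAc : (0:ℝ) < (A.card : ℝ) := by exact_mod_cast hApos
      nlinarith
    have hsmall := Finset.small_pow_of_small_tripling (m := 3*k+2) (by omega)
      (le_of_eq hK) hsym
    rw [show 3*k+2-2 = 3*k from by omega] at hsmall
    have hstep : ((A ^ (3*k+2)).card : ℝ) ^ ((1:ℝ)/3) ≤
        (K ^ (3*k) * (A.card : ℝ)) ^ ((1:ℝ)/3) :=
      Real.rpow_le_rpow (Nat.cast_nonneg _) hsmall (by norm_num)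
    have hsplit : (K ^ (3*k) * (A.card : ℝ)) ^ ((1:ℝ)/3) =
        K ^ k * ((A.card : ℝ)) ^ ((1:ℝ)/3) := by
      rw [Real.mul_rpow (by positivity) (Nat.cast_nonneg _)]
      congr 1
      rw [← Real.rpow_natCast K (3*k), ← Real.rpow_mul hK0, ← Real.rpow_natCast K k]
      congr 1
      push_cast
      ring
    rw [hsplit] at hstep
    calc 2 * ((A ^ (3 * k + 2)).card : ℝ) ^ ((1 : ℝ) / 3)
        ≤ 2 * (K ^ k * ((A.card : ℝ)) ^ ((1:ℝ)/3)) := by linarith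
      _ = 2 * K ^ k * (A.card : ℝ) ^ ((1 : ℝ) / 3) := by ring
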